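/- For every A ∈ ℝ^{S×m} and X ∈ ℝ^{n×m}, the spectral norm of their column-wise Khatri–Rao product satisfies ‖A∗X‖ ≤ (max_{j∈[m]} ‖A^j‖) · ‖X‖, where A^j denotes the j-th column of A and ‖A^j‖ its Euclidean norm. -/
import Mathlib


open scoped BigOperators

/-- The Euclidean norm of a finitely supported real vector. -/
noncomputable def eNorm {β : Type*} [Fintype β] (v : β → ℝ) : ℝ :=
  Real.sqrt (∑ i, v i ^ 2)

/-- The spectral norm of a real matrix: `‖M‖ = max_{ξ ∈ S^{m-1}} ‖Mξ‖`. -/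
noncomputable def specNorm {α β : Type*} [Fintype α] [Fintype β]
    (M : Matrix α β ℝ) : ℝ :=
  ⨆ ξ : {v : β → ℝ // eNorm v = 1}, eNorm (M.mulVec ξ.1)

lemma eNorm_nonneg {β : Type*} [Fintype β] (v : β → ℝ) : 0 ≤ eNorm v :=
  Real.sqrt_nonneg _

lemma eNorm_sq {β : Type*} [Fintype β] (v : β → ℝ) :
    eNorm v ^ 2 = ∑ i, v i ^ 2 :=
  Real.sq_sqrt (Finset.sum_nonneg fun i _ => sq_nonneg _)

lemma eNorm_smul {β : Type*} [Fintype β] (c : ℝ) (v : β → ℝ) :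
    eNorm (c • v) = |c| * eNorm v := by
  unfold eNorm
  have : ∑ i, (c • v) i ^ 2 = c ^ 2 * ∑ i, v i ^ 2 := by
    rw [Finset.mul_sum]; exact Finset.sum_congr rfl fun i _ => by simp [mul_pow]
  rw [this, Real.sqrt_mul (sq_nonneg _), Real.sqrt_sq_eq_abs]

lemma specNorm_nonneg {α β : Type*} [Fintype α] [Fintype β] (M : Matrix α β ℝ) :
    0 ≤ specNorm M :=
  Real.iSup_nonneg fun _ => eNorm_nonneg _

lemma bddAbove_specSet {α β : Type*} [Fintype α] [Fintype β] (M : Matrix α β ℝ) :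
    BddAbove (Set.range fun ξ : {v : β → ℝ // eNorm v = 1} => eNorm (M.mulVec ξ.1)) := by
  refine ⟨Real.sqrt (∑ a, ∑ b, M a b ^ 2), ?_⟩
  rintro x ⟨ξ, rfl⟩
  have hξ : ∑ b, ξ.1 b ^ 2 = 1 := by
    have := eNorm_sq ξ.1; rw [ξ.2] at this; simpa using this.symm
  unfold eNorm
  apply Real.sqrt_le_sqrt
  apply Finset.sum_le_sum
  intro a _
  have h2 : (∑ b, M a b * ξ.1 b) ^ 2 ≤ (∑ b, M a b ^ 2) * (∑ b, ξ.1 b ^ 2) :=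
    Finset.sum_mul_sq_le_sq_mul_sq _ _ _
  have h3 : M.mulVec ξ.1 a = ∑ b, M a b * ξ.1 b := rfl
  rw [h3]
  calc (∑ b, M a b * ξ.1 b) ^ 2 ≤ (∑ b, M a b ^ 2) * (∑ b, ξ.1 b ^ 2) := h2
    _ = ∑ b, M a b ^ 2 := by rw [hξ, mul_one]

lemma eNorm_mulVec_le {α β : Type*} [Fintype α] [Fintype β] (M : Matrix α β ℝ)
    (w : β → ℝ) : eNorm (M.mulVec w) ≤ specNorm M * eNorm w := by
  rcases eq_or_lt_of_le (eNorm_nonneg w) with h | h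
  · have hw : w = 0 := by
      have hs : ∑ i, w i ^ 2 = 0 := by
        rw [← eNorm_sq, ← h]; simp
      funext i
      have := (Finset.sum_eq_zero_iff_of_nonneg fun i _ => sq_nonneg (w i)).mp hs i
        (Finset.mem_univ i)
      exact pow_eq_zero_iff (n := 2) (by norm_num) |>.mp this
    rw [hw]
    simp [Matrix.mulVec_zero, eNorm, ← h]
  · set c := eNorm w with hc
    have hc0 : c ≠ 0 := ne_of_gt h
    set ξ : β → ℝ := c⁻¹ • w with hξdef
    have hξ : eNorm ξ = 1 := by
      rw [hξdef, eNorm_smul, abs_inv, abs_of_pos h, inv_mul_cancel₀ hc0]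
    have key : eNorm (M.mulVec ξ) ≤ specNorm M :=
      le_ciSup (bddAbove_specSet M) (⟨ξ, hξ⟩ : {v : β → ℝ // eNorm v = 1})
    have hmv : M.mulVec w = c • M.mulVec ξ := by
      rw [hξdef, Matrix.mulVec_smul]
      rw [smul_smul, mul_inv_cancel₀ hc0, one_smul]
    rw [hmv, eNorm_smul, abs_of_pos h]
    rw [mul_comm (specNorm M) c]
    exact mul_le_mul_of_nonneg_left key (le_of_lt h)

/-- The column-wise Khatri–Rao product: `(A ∗ X)_{(ν,i),j} = A_{νj} ⬝ X_{ij}`. -/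
def khatriRao {S n m : ℕ} (A : Matrix (Fin S) (Fin m) ℝ) (X : Matrix (Fin n) (Fin m) ℝ) :
    Matrix (Fin S × Fin n) (Fin m) ℝ :=
  Matrix.of fun p j => A p.1 j * X p.2 j

/-- `‖A ∗ X‖ ≤ (max_j ‖A^j‖) ⬝ ‖X‖`, where `A^j` is the `j`-th
column of `A`. -/
theorem specNorm_khatriRao_le {S n m : ℕ}
    (A : Matrix (Fin S) (Fin m) ℝ) (X : Matrix (Fin n) (Fin m) ℝ) :
    specNorm (khatriRao A X) ≤ (⨆ j : Fin m, eNorm fun ν => A ν j) * specNorm X := by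
  set K := ⨆ j : Fin m, eNorm fun ν => A ν j with hKdef
  have hKnn : 0 ≤ K := Real.iSup_nonneg fun _ => eNorm_nonneg _
  have hXnn : 0 ≤ specNorm X := specNorm_nonneg X
  apply Real.iSup_le _ (mul_nonneg hKnn hXnn)
  rintro ⟨ξ, hξ⟩
  have hξ1 : ∑ j, ξ j ^ 2 = 1 := by rw [← eNorm_sq, hξ]; norm_num
  have colle : ∀ j, ∑ ν, A ν j ^ 2 ≤ K ^ 2 := by
    intro j
    have h1 : eNorm (fun ν => A ν j) ≤ K :=
      le_ciSup (f := fun j : Fin m => eNorm fun ν => A ν j) (Set.Finite.bddAbove (Set.finite_range _)) j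
    calc ∑ ν, A ν j ^ 2 = eNorm (fun ν => A ν j) ^ 2 := (eNorm_sq _).symm
      _ ≤ K ^ 2 := pow_le_pow_left₀ (eNorm_nonneg _) h1 2
  set w : Fin S → Fin m → ℝ := fun ν j => A ν j * ξ j with hwdef
  have key : ∀ ν i, (khatriRao A X).mulVec ξ (ν, i) = X.mulVec (w ν) i := by
    intro ν i
    simp only [Matrix.mulVec, dotProduct, khatriRao, Matrix.of_apply, hwdef]
    exact Finset.sum_congr rfl fun j _ => by ring
  have hmain : ∑ p : Fin S × Fin n, ((khatriRao A X).mulVec ξ p) ^ 2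
      ≤ (K * specNorm X) ^ 2 := by
    calc ∑ p : Fin S × Fin n, ((khatriRao A X).mulVec ξ p) ^ 2
        = ∑ ν, ∑ i, (X.mulVec (w ν) i) ^ 2 := by
          rw [Fintype.sum_prod_type]
          exact Finset.sum_congr rfl fun ν _ =>
            Finset.sum_congr rfl fun i _ => by rw [key]
      _ = ∑ ν, eNorm (X.mulVec (w ν)) ^ 2 :=
          Finset.sum_congr rfl fun ν _ => (eNorm_sq _).symm
      _ ≤ ∑ ν, (specNorm X * eNorm (w ν)) ^ 2 :=
          Finset.sum_le_sum fun ν _ =>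
            pow_le_pow_left₀ (eNorm_nonneg _) (eNorm_mulVec_le X (w ν)) 2
      _ = specNorm X ^ 2 * ∑ ν, ∑ j, (A ν j * ξ j) ^ 2 := by
          rw [Finset.mul_sum]
          exact Finset.sum_congr rfl fun ν _ => by rw [mul_pow, eNorm_sq]
      _ = specNorm X ^ 2 * ∑ j, ξ j ^ 2 * ∑ ν, A ν j ^ 2 := by
          rw [Finset.sum_comm]
          congr 1
          refine Finset.sum_congr rfl fun j _ => ?_
          rw [Finset.mul_sum]
          exact Finset.sum_congr rfl fun ν _ => by ring
      _ ≤ specNorm X ^ 2 * ∑ j, ξ j ^ 2 * K ^ 2 := by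
          apply mul_le_mul_of_nonneg_left _ (sq_nonneg _)
          exact Finset.sum_le_sum fun j _ =>
            mul_le_mul_of_nonneg_left (colle j) (sq_nonneg _)
      _ = (K * specNorm X) ^ 2 := by
          rw [← Finset.sum_mul, hξ1]; ring
  calc eNorm ((khatriRao A X).mulVec ξ)
      = Real.sqrt (∑ p : Fin S × Fin n, ((khatriRao A X).mulVec ξ p) ^ 2) := rfl
    _ ≤ Real.sqrt ((K * specNorm X) ^ 2) := Real.sqrt_le_sqrt hmain
    _ = K * specNorm X := Real.sqrt_sq (mul_nonneg hKnn hXnn)
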